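/- Welford's single-pass update is correct: define m₀ = 0, M₀ = 0, and recursively m_n = m_{n−1} + (x_n − m_{n−1})/n and M_n = M_{n−1} + (x_n − m_{n−1})(x_n − m_n). Then for every n ≥ 1, m_n = (1/n) Σ_{i=1}^n x_i and M_n = Σ_{i=1}^n (x_i − m_n)². -/

import Mathlib

open Finset

/-- Correctness of Welford's single-pass recursion: the running mean equals the batch
mean and the running `M` equals the batch sum of squared deviations. -/
theorem welford_correct
    (x m M : ℕ → ℝ)
    (hm0 : m 0 = 0) (hM0 : M 0 = 0)
    (hm : ∀ n : ℕ, 1 ≤ n → m n = m (n - 1) + (x n - m (n - 1)) / n)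
    (hM : ∀ n : ℕ, 1 ≤ n → M n = M (n - 1) + (x n - m (n - 1)) * (x n - m n)) :
    ∀ n : ℕ, 1 ≤ n →
      m n = (∑ i ∈ Finset.Icc 1 n, x i) / n ∧
      M n = ∑ i ∈ Finset.Icc 1 n, (x i - m n) ^ 2 := by
  intro n hn
  induction n, hn using Nat.le_induction with
  | base =>
    have h1 := hm 1 le_rfl
    have h2 := hM 1 le_rfl
    simp [hm0, hM0] at h1 h2
    constructor
    · simp [h1]
    · rw [h2, h1]; simp
  | succ n hn IH =>
    have hn0 : (n : ℝ) ≠ 0 := Nat.cast_ne_zero.mpr (by omega)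
    have hn1 : ((n : ℝ) + 1) ≠ 0 := by positivity
    have h1 := hm (n + 1) (by omega)
    have h2 := hM (n + 1) (by omega)
    simp only [Nat.add_sub_cancel, Nat.cast_add, Nat.cast_one] at h1 h2
    have hcard : (Finset.Icc 1 n).card = n := by simp
    have hsum : ∑ i ∈ Finset.Icc 1 n, x i = n * m n := by
      rw [IH.1]; field_simp
    have hsplit : ∀ f : ℕ → ℝ, ∑ i ∈ Finset.Icc 1 (n + 1), f i
        = (∑ i ∈ Finset.Icc 1 n, f i) + f (n + 1) := fun f =>
      Finset.sum_Icc_succ_top (by omega) f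
    have key : ∀ c : ℝ, ∑ i ∈ Finset.Icc 1 n, (x i - c) ^ 2
        = M n + n * (m n - c) ^ 2 := by
      intro c
      have expand : ∀ i, (x i - c) ^ 2
          = (x i - m n) ^ 2 + (2 * (m n - c)) * x i + ((m n - c) * (-c - m n)) := by
        intro i; ring
      simp_rw [expand, Finset.sum_add_distrib, ← Finset.mul_sum, Finset.sum_const, hcard,
        hsum, ← IH.2, nsmul_eq_mul]
      ring
    constructor
    · rw [hsplit, hsum, h1, IH.1]
      field_simp
      push_cast; ring
    · rw [hsplit, key, h2, h1]
      field_simp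
      ring
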